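/- Let ω ∈ ℂ with |ω| < 1 and α ∈ ℂ. The 3×3 matrix [[ω, α, 0], [0, ω, α], [0, 0, ω]] is a contraction if and only if |α| ≤ (1 − |ω|)·√(1 + |ω|). -/

import Mathlib

set_option maxHeartbeats 1000000

lemma core_ineq (r a s t u : ℝ) (hr0 : 0 ≤ r) (hr1 : r < 1)
    (key : a^2 ≤ (1-r)^2*(1+r)) :
    (r*s+a*t)^2 + (r*t+a*u)^2 + (r*u)^2 ≤ s^2 + t^2 + u^2 := by
  set b := 1 - r^2 with hb
  have hbpos : 0 < b := by nlinarith
  have hd : 0 ≤ b^2 - a^2 := by nlinarith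
  have hkey' : a^2 ≤ (1-r)*b := by nlinarith
  rcases eq_or_lt_of_le hd with hd0 | hdpos
  · have hble : b ≤ 1 - r := by nlinarith
    have hrle : r ≤ 0 := by nlinarith
    have hr' : r = 0 := le_antisymm hrle hr0
    have hb1 : b = 1 := by rw [hb, hr']; ring
    have ha' : a^2 = 1 := by
      have h' : a^2 = b^2 := by linarith
      rw [hb1] at h'; simpa using h'
    rw [hr']
    nlinarith [sq_nonneg s]
  · set d := b^2 - a^2 with hdd
    have hid : d * b * (s^2 + t^2 + u^2 - ((r*s+a*t)^2 + (r*t+a*u)^2 + (r*u)^2))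
        = d * (b*s - r*a*t)^2 + (d*t - r*a*b*u)^2
          + b * (((1+r)*b - a^2) * (((1-r)*b - a^2) * u^2)) := by
      rw [hdd, hb]; ring
    have h1 : 0 ≤ d * (b*s - r*a*t)^2 := mul_nonneg hdpos.le (sq_nonneg _)
    have h2 : 0 ≤ (d*t - r*a*b*u)^2 := sq_nonneg _
    have h3 : 0 ≤ b * (((1+r)*b - a^2) * (((1-r)*b - a^2) * u^2)) := by
      have e1 : 0 ≤ (1-r)*b - a^2 := by nlinarith
      have e2 : 0 ≤ (1+r)*b - a^2 := by nlinarith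
      have := sq_nonneg u
      positivity
    have hq : 0 ≤ d * b * (s^2 + t^2 + u^2 - ((r*s+a*t)^2 + (r*t+a*u)^2 + (r*u)^2)) := by
      rw [hid]; linarith
    have hdb : 0 < d * b := mul_pos hdpos hbpos
    nlinarith [hq, hdb]


lemma apply3 (ω α : ℂ) (x : Fin 3 → ℂ) :
    Matrix.toEuclideanCLM (𝕜 := ℂ) !![ω, α, 0; 0, ω, α; 0, 0, ω] ((WithLp.equiv 2 _).symm x)
      = (WithLp.equiv 2 _).symm ![ω * x 0 + α * x 1, ω * x 1 + α * x 2, ω * x 2] := by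
  rw [WithLp.equiv_symm_apply, Matrix.toEuclideanCLM_toLp]
  congr 1
  ext i
  fin_cases i <;>
    simp [Matrix.toLin'_apply, Matrix.mulVec, dotProduct, Fin.sum_univ_three]

lemma norm3 (x : Fin 3 → ℂ) :
    ‖(WithLp.equiv 2 (Fin 3 → ℂ)).symm x‖ ^ 2 = ‖x 0‖ ^ 2 + ‖x 1‖ ^ 2 + ‖x 2‖ ^ 2 := by
  rw [EuclideanSpace.norm_eq, Real.sq_sqrt (by positivity)]
  simp [Fin.sum_univ_three]


lemma norm_real_mul (c : ℝ) (z : ℂ) : ‖(c:ℂ) * z‖ = |c| * ‖z‖ := by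
  rw [norm_mul, Complex.norm_real, Real.norm_eq_abs]

/-- The matrix `[[ω, α, 0], [0, ω, α], [0, 0, ω]]` with `|ω| < 1` is a contraction
iff `|α| ≤ (1 − |ω|)·√(1 + |ω|)`. -/
theorem stmt1 (ω α : ℂ) (hω : ‖ω‖ < 1) :
    ‖Matrix.toEuclideanCLM (𝕜 := ℂ) !![ω, α, 0; 0, ω, α; 0, 0, ω]‖ ≤ 1 ↔
      ‖α‖ ≤ (1 - ‖ω‖) * Real.sqrt (1 + ‖ω‖) := by
  set r := ‖ω‖ with hr
  set a := ‖α‖ with ha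
  have hr0 : 0 ≤ r := norm_nonneg _
  have ha0 : 0 ≤ a := norm_nonneg _
  have happ := apply3 ω α
  have hnorm := norm3
  have hS : Real.sqrt (1 + r) ^ 2 = 1 + r := Real.sq_sqrt (by linarith)
  have hS0 : 0 ≤ Real.sqrt (1 + r) := Real.sqrt_nonneg _
  constructor
  · intro h
    by_cases hω0 : ω = 0
    · -- r = 0 case: test vector e₂
      have hr' : r = 0 := by rw [hr, hω0, norm_zero]
      have hle : ‖Matrix.toEuclideanCLM (𝕜 := ℂ) !![ω, α, 0; 0, ω, α; 0, 0, ω] ((WithLp.equiv 2 (Fin 3 → ℂ)).symm ![0, 1, 0])‖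
          ≤ ‖(WithLp.equiv 2 (Fin 3 → ℂ)).symm ![0, 1, 0]‖ :=
        ((Matrix.toEuclideanCLM (𝕜 := ℂ) !![ω, α, 0; 0, ω, α; 0, 0, ω]).le_opNorm _).trans (mul_le_of_le_one_left (norm_nonneg _) h)
      rw [happ] at hle
      have h2 := pow_le_pow_left₀ (norm_nonneg _) hle 2
      rw [hnorm, hnorm] at h2
      simp [hω0] at h2
      rw [hr']
      norm_num
      simpa [ha] using h2
    · by_cases hα0 : α = 0
      · rw [ha, hα0, norm_zero]
        have h1r : (0:ℝ) ≤ 1 - r := by linarith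
        positivity
      · have hrpos : 0 < r := norm_pos_iff.mpr hω0
        have hapos : 0 < a := norm_pos_iff.mpr hα0
        have hb : (0:ℝ) < 1 - r^2 := by nlinarith
        have hle : ‖Matrix.toEuclideanCLM (𝕜 := ℂ) !![ω, α, 0; 0, ω, α; 0, 0, ω]
              ((WithLp.equiv 2 (Fin 3 → ℂ)).symm
                ![((r^3:ℝ):ℂ) * α^2, ((r*(1-r^2):ℝ):ℂ) * (ω*α), ((a^2:ℝ):ℂ) * ω^2])‖
            ≤ ‖(WithLp.equiv 2 (Fin 3 → ℂ)).symm
                ![((r^3:ℝ):ℂ) * α^2, ((r*(1-r^2):ℝ):ℂ) * (ω*α), ((a^2:ℝ):ℂ) * ω^2]‖ :=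
          ((Matrix.toEuclideanCLM (𝕜 := ℂ) !![ω, α, 0; 0, ω, α; 0, 0, ω]).le_opNorm _).trans
            (mul_le_of_le_one_left (norm_nonneg _) h)
        rw [happ] at hle
        have h2 := pow_le_pow_left₀ (norm_nonneg _) hle 2
        rw [hnorm, hnorm] at h2
        simp only [Matrix.cons_val_zero, Matrix.cons_val_one, Matrix.head_cons,
          Matrix.cons_val_two, Matrix.tail_cons] at h2
        rw [show ω * (((r^3:ℝ):ℂ) * α^2) + α * (((r*(1-r^2):ℝ):ℂ) * (ω*α))
              = ((r:ℝ):ℂ) * (ω * α^2) by push_cast; ring,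
            show ω * (((r*(1-r^2):ℝ):ℂ) * (ω*α)) + α * (((a^2:ℝ):ℂ) * ω^2)
              = ((r*(1-r^2)+a^2 : ℝ):ℂ) * (ω^2*α) by push_cast; ring,
            show ω * (((a^2:ℝ):ℂ) * ω^2) = ((a^2:ℝ):ℂ) * ω^3 by ring] at h2
        simp only [norm_real_mul, norm_mul, norm_pow, Complex.norm_real, Real.norm_eq_abs] at h2
        rw [← hr, ← ha] at h2
        rw [abs_of_nonneg hr0, abs_of_nonneg ha0,
            abs_of_nonneg (show (0:ℝ) ≤ 1-r^2 by nlinarith),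
            abs_of_nonneg (show (0:ℝ) ≤ r*(1-r^2)+a^2 by nlinarith)] at h2
        have P : (0:ℝ) < r^4 * a^2 * ((1-r^2) + r*(1-r^2) + a^2) :=
          mul_pos (mul_pos (pow_pos hrpos 4) (pow_pos hapos 2)) (by nlinarith)
        have key : a^2 ≤ (1-r)^2 * (1+r) := by nlinarith [h2, P]
        have hsq : a^2 ≤ ((1-r) * Real.sqrt (1+r))^2 := by
          rw [mul_pow, hS]; exact key
        nlinarith [mul_nonneg (by linarith : (0:ℝ) ≤ 1-r) hS0]
  · intro h
    have key : a^2 ≤ (1-r)^2 * (1+r) := by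
      have h' := mul_self_le_mul_self ha0 h
      rw [mul_mul_mul_comm] at h'
      nlinarith [hS]
    rw [ContinuousLinearMap.opNorm_le_iff (by norm_num : (0:ℝ) ≤ 1)]
    intro y
    rw [one_mul]
    have hy : y = (WithLp.equiv 2 (Fin 3 → ℂ)).symm ((WithLp.equiv 2 (Fin 3 → ℂ)) y) :=
      ((WithLp.equiv 2 (Fin 3 → ℂ)).symm_apply_apply y).symm
    rw [hy, happ]
    set x := (WithLp.equiv 2 (Fin 3 → ℂ)) y with hx
    have hsq : ‖(WithLp.equiv 2 (Fin 3 → ℂ)).symm ![ω * x 0 + α * x 1, ω * x 1 + α * x 2, ω * x 2]‖^2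
        ≤ ‖(WithLp.equiv 2 (Fin 3 → ℂ)).symm x‖^2 := by
      rw [hnorm, hnorm]
      simp only [Matrix.cons_val_zero, Matrix.cons_val_one, Matrix.head_cons,
        Matrix.cons_val_two, Matrix.tail_cons]
      have b0 : ‖ω * x 0 + α * x 1‖ ≤ r * ‖x 0‖ + a * ‖x 1‖ := by
        refine (norm_add_le _ _).trans ?_
        rw [norm_mul, norm_mul]
      have b1 : ‖ω * x 1 + α * x 2‖ ≤ r * ‖x 1‖ + a * ‖x 2‖ := by
        refine (norm_add_le _ _).trans ?_
        rw [norm_mul, norm_mul]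
      have b2 : ‖ω * x 2‖ = r * ‖x 2‖ := norm_mul _ _
      have c0 := pow_le_pow_left₀ (norm_nonneg _) b0 2
      have c1 := pow_le_pow_left₀ (norm_nonneg _) b1 2
      rw [b2]
      have := core_ineq r a ‖x 0‖ ‖x 1‖ ‖x 2‖ hr0 hω key
      linarith
    calc ‖(WithLp.equiv 2 (Fin 3 → ℂ)).symm ![ω * x 0 + α * x 1, ω * x 1 + α * x 2, ω * x 2]‖
        = Real.sqrt (‖(WithLp.equiv 2 (Fin 3 → ℂ)).symm ![ω * x 0 + α * x 1, ω * x 1 + α * x 2, ω * x 2]‖^2) := by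
          rw [Real.sqrt_sq (norm_nonneg _)]
      _ ≤ Real.sqrt (‖(WithLp.equiv 2 (Fin 3 → ℂ)).symm x‖^2) := Real.sqrt_le_sqrt hsq
      _ = ‖(WithLp.equiv 2 (Fin 3 → ℂ)).symm x‖ := Real.sqrt_sq (norm_nonneg _)
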